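/- Let σ_0, σ_1, σ > 0, h ≥ 0, and δ ∈ (0, 1/3). For a = 0,1 define Δ_a(n) = σ_a² / ((σ_a²/σ² + n)(σ_a²/σ² + 1 + n)) for n ∈ ℕ. Let (n_{0,t})_{t≥1} be any sequence of natural numbers with t^{2/3+δ} ≤ n_{0,t} ≤ t − t^{2/3+δ} for all sufficiently large t, set n_{1,t} = t − n_{0,t} and p_t = n_{0,t}/t. Then, as t → ∞, the difference Δ_0(n_{0,t})^h / (Δ_0(n_{0,t})^h + Δ_1(n_{1,t})^h) − p_t^{−2h}σ_0^{2h} / (p_t^{−2h}σ_0^{2h} + (1−p_t)^{−2h}σ_1^{2h}) converges to 0. -/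

import Mathlib

open Filter

/-- The expected one-step information gain of an arm with sampling variance `σa²`
after `n` observations, under a `N(0, σ²)` prior:
`Δ(n) = σa² / ((σa²/σ² + n) (σa²/σ² + 1 + n))`. -/
noncomputable def budGain (σ σa : ℝ) (n : ℕ) : ℝ :=
  σa ^ 2 / ((σa ^ 2 / σ ^ 2 + n) * (σa ^ 2 / σ ^ 2 + 1 + n))

private lemma frac_bound {x y : ℝ} (hx : 0 < x) (hy : 0 < y) :
    |1/(1+x) - 1/(1+y)| ≤ |x/y - 1| := by
  have h1 : (0:ℝ) < 1 + x := by linarith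
  have h2 : (0:ℝ) < 1 + y := by linarith
  have e1 : 1/(1+x) - 1/(1+y) = (y - x)/((1+x)*(1+y)) := by
    field_simp
    ring
  have e2 : x/y - 1 = (x - y)/y := by field_simp
  rw [e1, e2, abs_div, abs_div, abs_of_pos (mul_pos h1 h2), abs_of_pos hy,
    abs_sub_comm y x]
  gcongr
  nlinarith

private lemma ratio_bound {A B C D : ℝ} (hA : 0 < A) (hB : 0 < B) (hC : 0 < C) (hD : 0 < D) :
    |A/(A+B) - C/(C+D)| ≤ |(B/A)/(D/C) - 1| := by
  have e1 : A/(A+B) = 1/(1+B/A) := by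
    rw [show 1 + B/A = (A+B)/A by field_simp, one_div_div]
  have e2 : C/(C+D) = 1/(1+D/C) := by
    rw [show 1 + D/C = (C+D)/C by field_simp, one_div_div]
  rw [e1, e2]
  exact frac_bound (div_pos hB hA) (div_pos hD hC)

private lemma base_lim {d : ℝ} (hd : 0 < d) :
    Tendsto (fun n : ℕ => (n:ℝ)/(d+n)) atTop (nhds 1) := by
  have hdn : ∀ n : ℕ, (0:ℝ) < d + n := fun n => by positivity
  have h0 : Tendsto (fun n : ℕ => d/(d+n)) atTop (nhds 0) := by
    have hd2 : Tendsto (fun n : ℕ => d + (n:ℝ)) atTop atTop :=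
      tendsto_atTop_add_const_left _ d tendsto_natCast_atTop_atTop
    simpa [div_eq_mul_inv] using hd2.inv_tendsto_atTop.const_mul d
  have := tendsto_const_nhds (x := (1:ℝ)) (f := atTop (α := ℕ)) |>.sub h0
  rw [sub_zero] at this
  refine this.congr fun n => ?_
  field_simp
  ring

private lemma phi_tendsto {c : ℝ} (hc : 0 < c) :
    Tendsto (fun n : ℕ => (n:ℝ)^2/((c+n)*(c+1+n))) atTop (nhds 1) := by
  have h1 := base_lim hc
  have h2 := base_lim (show (0:ℝ) < c + 1 by linarith)
  have := h1.mul h2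
  rw [one_mul] at this
  refine this.congr fun n => ?_
  rw [div_mul_div_comm, sq]

private lemma budGain_pos {σ σa : ℝ} (hσ : 0 < σ) (hσa : 0 < σa) (n : ℕ) :
    0 < budGain σ σa n := by
  unfold budGain
  have h1 : 0 < σa ^ 2 / σ ^ 2 := by positivity
  have h2 : 0 < σa ^ 2 / σ ^ 2 + n := by positivity
  have h3 : 0 < σa ^ 2 / σ ^ 2 + 1 + n := by positivity
  positivity

private lemma rpow_identity {Δ₀ Δ₁ p q σ₀ σ₁ h : ℝ} (hΔ₀ : 0 < Δ₀) (hΔ₁ : 0 < Δ₁)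
    (hp : 0 < p) (hq : 0 < q) (hσ₀ : 0 < σ₀) (hσ₁ : 0 < σ₁) :
    (Δ₁^h/Δ₀^h)/((q^(-(2*h))*σ₁^(2*h))/(p^(-(2*h))*σ₀^(2*h)))
      = ((Δ₁ * q^2 * σ₀^2) / (Δ₀ * p^2 * σ₁^2))^h := by
  rw [show -(2*h) = (-2:ℝ)*h by ring]
  rw [Real.rpow_mul hp.le, Real.rpow_mul hq.le, Real.rpow_mul hσ₀.le, Real.rpow_mul hσ₁.le]
  rw [← Real.mul_rpow (by positivity) (by positivity),
      ← Real.mul_rpow (by positivity) (by positivity),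
      ← Real.div_rpow (by positivity) (by positivity),
      ← Real.div_rpow (by positivity) (by positivity),
      ← Real.div_rpow (by positivity) (by positivity)]
  congr 1
  rw [Real.rpow_neg hp.le, Real.rpow_neg hq.le, Real.rpow_two, Real.rpow_two,
      Real.rpow_two, Real.rpow_two]
  field_simp

private lemma w_eq_phi {σ σ₀ σ₁ : ℝ} (hσ : 0 < σ) (hσ₀ : 0 < σ₀) (hσ₁ : 0 < σ₁)
    {t n m : ℕ} (hn : 0 < n) (hm : 0 < m) (htm : (m:ℝ) = (t:ℝ) - n) (ht : 0 < t) :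
    (budGain σ σ₁ m * (1 - (n:ℝ)/t)^2 * σ₀^2) / (budGain σ σ₀ n * ((n:ℝ)/t)^2 * σ₁^2)
      = ((m:ℝ)^2/((σ₁^2/σ^2+m)*(σ₁^2/σ^2+1+m))) / ((n:ℝ)^2/((σ₀^2/σ^2+n)*(σ₀^2/σ^2+1+n))) := by
  have ht' : (0:ℝ) < t := by exact_mod_cast ht
  have hn' : (0:ℝ) < n := by exact_mod_cast hn
  have hm' : (0:ℝ) < m := by exact_mod_cast hm
  have h1p : 1 - (n:ℝ)/t = (m:ℝ)/t := by rw [htm]; field_simp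
  have hc0 : (0:ℝ) < σ₀^2/σ^2 + n := by positivity
  have hc0' : (0:ℝ) < σ₀^2/σ^2 + 1 + n := by positivity
  have hc1 : (0:ℝ) < σ₁^2/σ^2 + m := by positivity
  have hc1' : (0:ℝ) < σ₁^2/σ^2 + 1 + m := by positivity
  rw [h1p]
  unfold budGain
  field_simp

/-- **Example 1, interior-region approximation.** If the arm-0 counts satisfy
`t^{2/3+δ} ≤ n₀ t ≤ t - t^{2/3+δ}` for all sufficiently large `t`, with
`δ ∈ (0,1/3)`, `n₁ t = t - n₀ t` and `p t = n₀ t / t`, then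
`Δ₀(n₀ t)^h/(Δ₀(n₀ t)^h + Δ₁(n₁ t)^h)
  − p_t^{-2h}σ₀^{2h}/(p_t^{-2h}σ₀^{2h} + (1-p_t)^{-2h}σ₁^{2h}) → 0`. -/
theorem stmt_8 (σ σ₀ σ₁ h δ : ℝ)
    (hσ : 0 < σ) (hσ₀ : 0 < σ₀) (hσ₁ : 0 < σ₁) (hh : 0 ≤ h)
    (hδ : δ ∈ Set.Ioo (0 : ℝ) (1 / 3))
    (n₀ : ℕ → ℕ)
    (hn₀ : ∀ᶠ t : ℕ in atTop, (t : ℝ) ^ ((2 : ℝ) / 3 + δ) ≤ (n₀ t : ℝ) ∧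
      (n₀ t : ℝ) ≤ (t : ℝ) - (t : ℝ) ^ ((2 : ℝ) / 3 + δ)) :
    Tendsto (fun t =>
        budGain σ σ₀ (n₀ t) ^ h /
          (budGain σ σ₀ (n₀ t) ^ h + budGain σ σ₁ (t - n₀ t) ^ h) -
        ((n₀ t : ℝ) / t) ^ (-(2 * h)) * σ₀ ^ (2 * h) /
          (((n₀ t : ℝ) / t) ^ (-(2 * h)) * σ₀ ^ (2 * h) +
            (1 - (n₀ t : ℝ) / t) ^ (-(2 * h)) * σ₁ ^ (2 * h)))
      atTop (nhds 0) := by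
  obtain ⟨hδ0, hδ13⟩ := hδ
  have hα : 0 < (2:ℝ)/3 + δ := by linarith
  have hrt : Tendsto (fun t : ℕ => (t:ℝ) ^ ((2:ℝ)/3 + δ)) atTop atTop :=
    (tendsto_rpow_atTop hα).comp tendsto_natCast_atTop_atTop
  -- basic eventual facts
  have hfacts : ∀ᶠ t : ℕ in atTop, 0 < n₀ t ∧ n₀ t < t ∧
      ((t - n₀ t : ℕ) : ℝ) = (t:ℝ) - (n₀ t : ℝ) ∧
      (t:ℝ) ^ ((2:ℝ)/3 + δ) ≤ ((t - n₀ t : ℕ) : ℝ) := by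
    filter_upwards [hn₀, eventually_gt_atTop 0] with t ht htpos
    obtain ⟨h1, h2⟩ := ht
    have htR : (0:ℝ) < t := by exact_mod_cast htpos
    have hpow : (0:ℝ) < (t:ℝ) ^ ((2:ℝ)/3 + δ) := Real.rpow_pos_of_pos htR _
    have hn0pos : 0 < n₀ t := by
      have : (0:ℝ) < (n₀ t : ℝ) := lt_of_lt_of_le hpow h1
      exact_mod_cast this
    have hlt : n₀ t < t := by
      have : (n₀ t : ℝ) < t := lt_of_le_of_lt h2 (by linarith)
      exact_mod_cast this
    have hcast : ((t - n₀ t : ℕ) : ℝ) = (t:ℝ) - (n₀ t : ℝ) := by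
      rw [Nat.cast_sub hlt.le]
    refine ⟨hn0pos, hlt, hcast, ?_⟩
    rw [hcast]; linarith
  have hn₀top : Tendsto n₀ atTop atTop := by
    rw [← tendsto_natCast_atTop_iff (R := ℝ)]
    exact tendsto_atTop_mono' _ (hn₀.mono fun t ht => ht.1) hrt
  have hmtop : Tendsto (fun t => t - n₀ t) atTop atTop := by
    rw [← tendsto_natCast_atTop_iff (R := ℝ)]
    exact tendsto_atTop_mono' _ (hfacts.mono fun t ht => ht.2.2.2) hrt
  -- the comparison ratio
  set c₀ : ℝ := σ₀^2/σ^2 with hc₀def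
  set c₁ : ℝ := σ₁^2/σ^2 with hc₁def
  have hc₀ : 0 < c₀ := by positivity
  have hc₁ : 0 < c₁ := by positivity
  set w : ℕ → ℝ := fun t =>
    (budGain σ σ₁ (t - n₀ t) * (1 - (n₀ t : ℝ)/t)^2 * σ₀^2) /
      (budGain σ σ₀ (n₀ t) * ((n₀ t : ℝ)/t)^2 * σ₁^2) with hwdef
  have hw : Tendsto w atTop (nhds 1) := by
    have hφ0 : Tendsto (fun t => ((n₀ t : ℝ))^2/((c₀+(n₀ t : ℕ))*(c₀+1+(n₀ t : ℕ))))
        atTop (nhds 1) := (phi_tendsto hc₀).comp hn₀top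
    have hφ1 : Tendsto (fun t => (((t - n₀ t : ℕ) : ℝ))^2 /
        ((c₁+((t - n₀ t : ℕ) : ℕ))*(c₁+1+((t - n₀ t : ℕ) : ℕ)))) atTop (nhds 1) :=
      (phi_tendsto hc₁).comp hmtop
    have hdiv := hφ1.div hφ0 one_ne_zero
    rw [div_one] at hdiv
    refine hdiv.congr' ?_
    filter_upwards [hfacts, eventually_gt_atTop 0] with t ht htpos
    obtain ⟨hn0pos, hlt, hcast, _⟩ := ht
    exact (w_eq_phi hσ hσ₀ hσ₁ hn0pos (by omega) hcast htpos).symm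
  have hwh : Tendsto (fun t => w t ^ h) atTop (nhds 1) := by
    have hcont := (Real.continuousAt_rpow_const 1 h (Or.inl one_ne_zero)).tendsto
    have := hcont.comp hw
    simpa [Real.one_rpow, Function.comp_def] using this
  have habs : Tendsto (fun t => |w t ^ h - 1|) atTop (nhds 0) := by
    have := (hwh.sub_const 1).abs
    simpa using this
  refine squeeze_zero_norm' ?_ habs
  filter_upwards [hfacts, eventually_gt_atTop 0] with t ht htpos
  obtain ⟨hn0pos, hlt, hcast, _⟩ := ht
  have htR : (0:ℝ) < t := by exact_mod_cast htpos
  have hnR : (0:ℝ) < (n₀ t : ℝ) := by exact_mod_cast hn0pos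
  have hp : 0 < (n₀ t : ℝ)/t := by positivity
  have hq : 0 < 1 - (n₀ t : ℝ)/t := by
    have : (n₀ t : ℝ) < t := by exact_mod_cast hlt
    have := (div_lt_one htR).mpr this
    linarith
  have hΔ₀ : 0 < budGain σ σ₀ (n₀ t) := budGain_pos hσ hσ₀ _
  have hΔ₁ : 0 < budGain σ σ₁ (t - n₀ t) := budGain_pos hσ hσ₁ _
  have hA : 0 < budGain σ σ₀ (n₀ t) ^ h := Real.rpow_pos_of_pos hΔ₀ h
  have hB : 0 < budGain σ σ₁ (t - n₀ t) ^ h := Real.rpow_pos_of_pos hΔ₁ h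
  have hC : 0 < ((n₀ t : ℝ)/t) ^ (-(2*h)) * σ₀ ^ (2*h) :=
    mul_pos (Real.rpow_pos_of_pos hp _) (Real.rpow_pos_of_pos hσ₀ _)
  have hD : 0 < (1 - (n₀ t : ℝ)/t) ^ (-(2*h)) * σ₁ ^ (2*h) :=
    mul_pos (Real.rpow_pos_of_pos hq _) (Real.rpow_pos_of_pos hσ₁ _)
  rw [Real.norm_eq_abs]
  calc |budGain σ σ₀ (n₀ t) ^ h /
          (budGain σ σ₀ (n₀ t) ^ h + budGain σ σ₁ (t - n₀ t) ^ h) -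
        ((n₀ t : ℝ) / t) ^ (-(2 * h)) * σ₀ ^ (2 * h) /
          (((n₀ t : ℝ) / t) ^ (-(2 * h)) * σ₀ ^ (2 * h) +
            (1 - (n₀ t : ℝ) / t) ^ (-(2 * h)) * σ₁ ^ (2 * h))|
      ≤ |(budGain σ σ₁ (t - n₀ t) ^ h / budGain σ σ₀ (n₀ t) ^ h) /
          (((1 - (n₀ t : ℝ)/t) ^ (-(2*h)) * σ₁ ^ (2*h)) /
            (((n₀ t : ℝ)/t) ^ (-(2*h)) * σ₀ ^ (2*h))) - 1| :=
        ratio_bound hA hB hC hD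
    _ = |w t ^ h - 1| := by
        rw [rpow_identity hΔ₀ hΔ₁ hp hq hσ₀ hσ₁]
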